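/- arXiv:1410.1693 — 2 statements merged into one kernel-verified Lean document; each statement's English description precedes it below -/
import Mathlib

section
/- The set of rational numbers {F(p) : p an odd prime} is infinite, where F(p) := 47/64 + (1/128)·1/(2^{o(p)}−1) + (1/64)·(2^p/(2^p−1))·(2^{o(p)}/(2^{o(p)}−1))·Σ_{x∈L(p)} 2^{−(x+r(p,x))}. -/
/-- `ℤ[1/2]`: the subring of `ℚ` of rationals whose denominator is a power of `2`. -/
def Zhalf : Subring ℚ where
  carrier := {q : ℚ | ∃ (m : ℤ) (n : ℕ), q = (m : ℚ) / 2 ^ n}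
  zero_mem' := ⟨0, 0, by norm_num⟩
  one_mem' := ⟨1, 0, by norm_num⟩
  add_mem' := by
    rintro a b ⟨m, n, rfl⟩ ⟨m', n', rfl⟩
    exact ⟨m * 2 ^ n' + m' * 2 ^ n, n + n', by push_cast [pow_add]; field_simp⟩
  mul_mem' := by
    rintro a b ⟨m, n, rfl⟩ ⟨m', n', rfl⟩
    exact ⟨m * m', n + n', by push_cast [pow_add]; field_simp⟩
  neg_mem' := by
    rintro a ⟨m, n, rfl⟩
    exact ⟨-m, n, by push_cast; ring⟩

/-- `o(p)`: the multiplicative order of `2` modulo `p`. -/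
noncomputable def oOrd (p : ℕ) : ℕ := orderOf (2 : ZMod p)

/-- `L(p)`: the set of `x` with `2 ≤ x ≤ p+1` congruent mod `p` to a power of `2`. -/
noncomputable def Lset (p : ℕ) : Finset ℕ :=
  letI : DecidablePred fun x : ℕ => ∃ i : ℕ, (2 : ZMod p) ^ i = (x : ZMod p) :=
    fun _ => Classical.propDecidable _
  (Finset.Icc 2 (p + 1)).filter fun x => ∃ i : ℕ, (2 : ZMod p) ^ i = (x : ZMod p)

/-- `r(p,x)`: the least natural number `r` with `2^r ≡ x (mod p)`. -/
noncomputable def rpx (p x : ℕ) : ℕ := sInf {r : ℕ | (2 : ZMod p) ^ r = (x : ZMod p)}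

/-- The value `F(p)` from the paper. -/
noncomputable def Fval (p : ℕ) : ℝ :=
  47 / 64 + (1 / 128) * (1 / (2 ^ oOrd p - 1)) +
    (1 / 64) * (2 ^ p / (2 ^ p - 1)) * ((2 : ℝ) ^ oOrd p / (2 ^ oOrd p - 1)) *
      ∑ x ∈ Lset p, (1 : ℝ) / 2 ^ (x + rpx p x)


noncomputable def fseq (i : ℕ) : ℝ := (1/2 : ℝ) ^ (2 ^ (i+1) + (i+1))

lemma fseq_pos (i : ℕ) : 0 < fseq i := by unfold fseq; positivity

lemma fseq_summable : Summable fseq := by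
  apply Summable.of_nonneg_of_le (fun i => (fseq_pos i).le)
    (fun i => ?_) (summable_geometric_of_lt_one (by norm_num) (by norm_num : (1/2:ℝ) < 1))
  unfold fseq
  apply pow_le_pow_of_le_one (by norm_num) (by norm_num)
  have := Nat.lt_two_pow_self (n := i+1)
  omega

noncomputable def sigmaS : ℝ := ∑' i, fseq i

lemma partial_le_sigma (m : ℕ) : ∑ i ∈ Finset.range m, fseq i ≤ sigmaS :=
  Summable.sum_le_tsum _ (fun i _ => (fseq_pos i).le) fseq_summable

lemma sigma_le_partial (m : ℕ) : sigmaS ≤ ∑ i ∈ Finset.range m, fseq i + 2 * fseq m := by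
  have h := (Summable.sum_add_tsum_nat_add m fseq_summable).symm
  rw [sigmaS, h]
  gcongr
  have hle : ∀ i : ℕ, fseq (i + m) ≤ fseq m * (1/2:ℝ)^i := by
    intro i
    rw [fseq, fseq, ← pow_add]
    apply pow_le_pow_of_le_one (by norm_num) (by norm_num)
    have : 2^(m+1) ≤ 2^(i+m+1) := Nat.pow_le_pow_right (by norm_num) (by omega)
    omega
  calc ∑' i, fseq (i + m) ≤ ∑' i : ℕ, fseq m * (1/2:ℝ)^i := by
        apply Summable.tsum_le_tsum hle
        · exact (summable_nat_add_iff m).mpr fseq_summable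
        · exact (summable_geometric_of_lt_one (by norm_num) (by norm_num)).mul_left _
    _ = 2 * fseq m := by
        rw [tsum_mul_left, tsum_geometric_of_lt_one (by norm_num) (by norm_num)]
        ring

lemma sigma_pos : 0 < sigmaS :=
  lt_of_lt_of_le (by simpa using fseq_pos 0) (by simpa using partial_le_sigma 1)

lemma sigma_ge : 1/8 ≤ sigmaS := by
  have h := partial_le_sigma 1
  simp [fseq] at h
  norm_num at h
  linarith

lemma sigma_le_quarter : sigmaS ≤ 1/4 := by
  have := sigma_le_partial 0
  simp [fseq] at this
  norm_num at this ⊢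
  linarith

section NT
variable {p : ℕ}

lemma two_nz (h11 : 11 ≤ p) : (2 : ZMod p) ≠ 0 := by
  intro h
  have h2 : ((2:ℕ) : ZMod p) = 0 := by exact_mod_cast h
  rw [ZMod.natCast_eq_zero_iff] at h2
  have := Nat.le_of_dvd (by norm_num) h2
  omega

lemma ord_pos (hp : p.Prime) (h11 : 11 ≤ p) : 0 < oOrd p := by
  haveI : Fact p.Prime := ⟨hp⟩
  rw [oOrd, orderOf_pos_iff, isOfFinOrder_iff_pow_eq_one]
  exact ⟨p - 1, by omega, ZMod.pow_card_sub_one_eq_one (two_nz h11)⟩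

lemma ord_le (hp : p.Prime) (h11 : 11 ≤ p) : oOrd p ≤ p - 1 := by
  haveI : Fact p.Prime := ⟨hp⟩
  exact Nat.le_of_dvd (by omega)
    (orderOf_dvd_of_pow_eq_one (ZMod.pow_card_sub_one_eq_one (two_nz h11)))

lemma p_lt_pow_ord (hp : p.Prime) (h11 : 11 ≤ p) : p + 1 ≤ 2 ^ oOrd p := by
  have h3 : 0 < oOrd p := ord_pos hp h11
  have h1 : ((2^(oOrd p) : ℕ) : ZMod p) = ((1:ℕ) : ZMod p) := by
    push_cast
    exact pow_orderOf_eq_one _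
  rw [ZMod.natCast_eq_natCast_iff] at h1
  have h2 : p ∣ 2^(oOrd p) - 1 := (Nat.modEq_iff_dvd' Nat.one_le_two_pow).mp h1.symm
  have h4 : 2 ≤ 2 ^ oOrd p := by
    calc 2 = 2^1 := rfl
    _ ≤ 2 ^ oOrd p := Nat.pow_le_pow_right (by norm_num) h3
  have := Nat.le_of_dvd (by omega) h2
  omega

lemma cast_inj_of_lt {a b : ℕ} (ha : a < p) (hb : b < p)
    (h : (a : ZMod p) = (b : ZMod p)) : a = b := by
  have h1 := ZMod.val_cast_of_lt ha
  have h2 := ZMod.val_cast_of_lt hb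
  rw [← h1, ← h2, h]

lemma mem_Lset_iff {x : ℕ} :
    x ∈ Lset p ↔ (2 ≤ x ∧ x ≤ p + 1) ∧ ∃ i, (2 : ZMod p) ^ i = (x : ZMod p) := by
  classical
  simp [Lset, Finset.mem_filter, Finset.mem_Icc]

lemma rpx_spec {x : ℕ} (hx : x ∈ Lset p) : (2 : ZMod p) ^ (rpx p x) = (x : ZMod p) :=
  Nat.sInf_mem (mem_Lset_iff.mp hx).2

lemma pow_mem_Lset (h2 : 2 ≤ p) {i : ℕ} (hi : 1 ≤ i) (hle : 2^i ≤ p - 1) :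
    2^i ∈ Lset p ∧ rpx p (2^i) = i := by
  have hplt : 2^i < p := by omega
  have h2i : 2 ≤ 2^i := by
    calc 2 = 2^1 := rfl
    _ ≤ 2^i := Nat.pow_le_pow_right (by norm_num) hi
  have hmemset : i ∈ {r : ℕ | (2 : ZMod p) ^ r = ((2^i : ℕ) : ZMod p)} := by
    simp only [Set.mem_setOf_eq]; push_cast; ring
  refine ⟨mem_Lset_iff.mpr ⟨⟨h2i, by omega⟩, ⟨i, by push_cast; ring⟩⟩, ?_⟩
  refine le_antisymm (Nat.sInf_le hmemset) (le_csInf ⟨i, hmemset⟩ ?_)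
  intro r hr
  by_contra hlt
  push_neg at hlt
  have hrlt : 2^r < 2^i := Nat.pow_lt_pow_right (by norm_num) hlt
  have hcast : ((2^r : ℕ) : ZMod p) = ((2^i : ℕ) : ZMod p) := by
    push_cast
    simpa using hr
  have := cast_inj_of_lt (by omega) hplt hcast
  omega

lemma p_not_mem_Lset (hp : p.Prime) (h11 : 11 ≤ p) : p ∉ Lset p := by
  haveI : Fact p.Prime := ⟨hp⟩
  intro h
  have hs := rpx_spec h
  rw [ZMod.natCast_self] at hs
  exact pow_ne_zero _ (two_nz h11) hs

end NT

set_option maxHeartbeats 1000000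

lemma arith_main {A B S σ P εf : ℝ} (hP : 11 ≤ P)
    (hA1 : P + 1 ≤ A) (hB1 : P + 1 ≤ B) (hBA : 2*B ≤ A)
    (hσl : 1/8 ≤ σ) (hσu : σ ≤ 1/4)
    (hSl : σ - εf ≤ S) (hSu : S ≤ σ + 1/P)
    (hε : εf * A = 1/16) :
    47/64 + σ/64 < 47/64 + (1/128)*(1/(B-1)) + (1/64)*(A/(A-1))*(B/(B-1))*S ∧
    47/64 + (1/128)*(1/(B-1)) + (1/64)*(A/(A-1))*(B/(B-1))*S ≤ 47/64 + σ/64 + 1/P := by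
  have hPpos : (0:ℝ) < P := by linarith
  have hApos : (0:ℝ) < A - 1 := by linarith
  have hBpos : (0:ℝ) < B - 1 := by linarith
  have hABpos : (0:ℝ) < (A-1)*(B-1) := by positivity
  have h0 : (0:ℝ) ≤ A*B := by nlinarith
  have hT : (1/64)*(A/(A-1))*(B/(B-1))*S = (1/64)*((A*B*S)/((A-1)*(B-1))) := by
    field_simp
  have hABe : A*B*εf = B/16 := by
    have h : A*B*εf = B*(εf*A) := by ring
    rw [h, hε]; ring
  constructor
  · -- lower bound
    have hS' : A*B*σ - A*B*εf ≤ A*B*S := by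
      nlinarith [mul_le_mul_of_nonneg_left hSl h0]
    have key : B/16 ≤ σ*(A+B-1) := by
      nlinarith [mul_nonneg (by linarith : (0:ℝ) ≤ σ - 1/8) (by linarith : (0:ℝ) ≤ A + B - 1)]
    have h1 : σ ≤ (A*B*S)/((A-1)*(B-1)) := by
      rw [le_div_iff₀ hABpos]
      nlinarith [hS', key, hABe]
    have h2 : (0:ℝ) < (1/128)*(1/(B-1)) := by positivity
    rw [hT]
    have h3 : σ/64 ≤ (1/64)*((A*B*S)/((A-1)*(B-1))) := by linarith
    linarith
  · -- upper bound
    set w := 1/P with hw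
    have hwpos : 0 < w := by positivity
    have hw11 : w ≤ 1/11 := by
      rw [hw]; exact one_div_le_one_div_of_le (by norm_num) hP
    have hwP : w * P = 1 := by rw [hw]; field_simp
    have hwA : 1 + w ≤ w * A := by
      have := mul_le_mul_of_nonneg_left hA1 hwpos.le
      nlinarith
    have hwB : 1 + w ≤ w * B := by
      have := mul_le_mul_of_nonneg_left hB1 hwpos.le
      nlinarith
    have hu1 : 1/(B-1) ≤ w := by
      rw [hw]; exact one_div_le_one_div_of_le hPpos (by linarith)
    have hu2 : (A*B*S)/((A-1)*(B-1)) ≤ σ + (9/4)*w := by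
      rw [div_le_iff₀ hABpos]
      have h3 : A*B*S ≤ A*B*(σ+w) := by
        nlinarith [mul_le_mul_of_nonneg_left hSu h0]
      have hk2 : (5/8)*(A+B) ≤ (5/4)*(w*(A*B)) := by
        nlinarith [mul_nonneg (by linarith : (0:ℝ) ≤ w*A - 1) (by linarith : (0:ℝ) ≤ B),
          mul_nonneg (by linarith : (0:ℝ) ≤ w*B - 1) (by linarith : (0:ℝ) ≤ A)]
      have hσw : σ + (9/4)*w ≤ 5/8 := by linarith
      have hk3 : (σ + (9/4)*w)*(A+B) ≤ (5/8)*(A+B) :=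
        mul_le_mul_of_nonneg_right hσw (by linarith)
      nlinarith [h3, hk2, hk3, hwpos.le, hσl]
    rw [hT]
    linarith [hu1, hu2, hwpos]

noncomputable def gbd (p m x : ℕ) : ℝ :=
  if x = p + 1 then (1/2:ℝ)^(p+1)
  else (if x ∈ (Finset.range m).image (fun j => 2^(j+1)) then (1/2:ℝ)^(x + Nat.log 2 x) else 0)
       + (1/2:ℝ)^x * (1/(p:ℝ))

lemma gbd_nonneg (p m x : ℕ) : 0 ≤ gbd p m x := by
  rw [gbd]
  split
  · positivity
  · split <;> positivity

lemma key_bounds {p : ℕ} (hp : p.Prime) (h11 : 11 ≤ p) :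
    47/64 + sigmaS/64 < Fval p ∧ Fval p ≤ 47/64 + sigmaS/64 + 1/(p:ℝ) := by
  haveI : Fact p.Prime := ⟨hp⟩
  have hpodd : p % 2 = 1 := by
    rcases hp.eq_two_or_odd with h | h
    · omega
    · exact h
  set o := oOrd p with ho
  set m := Nat.log 2 (p-1) with hm
  -- nat facts
  have hopos : 0 < o := ord_pos hp h11
  have hole : o ≤ p - 1 := ord_le hp h11
  have hppow : p + 1 ≤ 2^o := p_lt_pow_ord hp h11
  have hm3 : 3 ≤ m := by
    rw [hm]
    refine (Nat.le_log_iff_pow_le (by norm_num) (by omega)).mpr ?_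
    norm_num
    omega
  have hmle : 2^m ≤ p - 1 := by rw [hm]; exact Nat.pow_log_le_self 2 (by omega)
  have hmgt : p - 1 < 2^(m+1) := by rw [hm]; exact Nat.lt_pow_succ_log_self (by norm_num) _
  have hp1le : p + 1 ≤ 2^(m+1) := by
    have he : 2^(m+1) = 2 * 2^m := by ring
    omega
  set S := ∑ x ∈ Lset p, (1 : ℝ) / 2 ^ (x + rpx p x) with hSdef
  set Spow := (Finset.range m).image (fun j : ℕ => 2^(j+1)) with hSpowdef
  have hSpowmem : ∀ j < m, 2^(j+1) ∈ Lset p ∧ rpx p (2^(j+1)) = j+1 := by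
    intro j hj
    refine pow_mem_Lset (by omega) (by omega) ?_
    exact le_trans (Nat.pow_le_pow_right (by norm_num) (by omega)) hmle
  have hsub : Spow ⊆ Lset p := by
    intro x hx
    rw [hSpowdef, Finset.mem_image] at hx
    obtain ⟨j, hj, rfl⟩ := hx
    exact (hSpowmem j (Finset.mem_range.mp hj)).1
  have hinj : ∀ a ∈ Finset.range m, ∀ b ∈ Finset.range m, 2^(a+1) = 2^(b+1) → a = b := by
    intro a _ b _ h
    have := Nat.pow_right_injective (le_refl 2) h
    omega
  have hSpow_sum : ∑ x ∈ Spow, (1:ℝ) / 2 ^ (x + rpx p x) = ∑ j ∈ Finset.range m, fseq j := by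
    rw [hSpowdef, Finset.sum_image hinj]
    refine Finset.sum_congr rfl fun j hj => ?_
    rw [(hSpowmem j (Finset.mem_range.mp hj)).2, fseq, one_div_pow]
  have hlow : ∑ j ∈ Finset.range m, fseq j ≤ S := by
    rw [← hSpow_sum, hSdef]
    exact Finset.sum_le_sum_of_subset_of_nonneg hsub (fun x _ _ => by positivity)
  -- upper bound for S
  have hbound : ∀ x ∈ Lset p, (1:ℝ)/2^(x + rpx p x) ≤ gbd p m x := by
    intro x hx
    obtain ⟨⟨hx2, hxle⟩, -⟩ := mem_Lset_iff.mp hx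
    have hr := rpx_spec hx
    by_cases hxp1 : x = p + 1
    · rw [gbd, if_pos hxp1, ← one_div_pow]
      apply pow_le_pow_of_le_one (by norm_num) (by norm_num)
      omega
    · rw [gbd, if_neg hxp1]
      have hxp : x ≠ p := fun h => p_not_mem_Lset hp h11 (h ▸ hx)
      have hxle' : x ≤ p - 1 := by omega
      by_cases hxS : x ∈ Spow
      · obtain ⟨j, hj, hxe⟩ := Finset.mem_image.mp (hSpowdef ▸ hxS)
        have hrj := (hSpowmem j (Finset.mem_range.mp hj)).2
        have hlog : Nat.log 2 x = j + 1 := by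
          rw [← hxe]; exact Nat.log_pow (by norm_num) _
        rw [if_pos (hSpowdef ▸ hxS), ← one_div_pow, hlog, ← hxe, hrj]
        have hnn : (0:ℝ) ≤ (1/2:ℝ)^(2^(j+1)) * (1/(p:ℝ)) := by positivity
        linarith
      · rw [if_neg (hSpowdef ▸ hxS)]
        have hple : p ≤ 2^(rpx p x) := by
          by_contra hc
          push_neg at hc
          have hcast : ((2^(rpx p x) : ℕ) : ZMod p) = (x : ZMod p) := by
            push_cast; exact hr
          have hex : 2^(rpx p x) = x := cast_inj_of_lt hc (by omega) hcast
          have hr1 : 1 ≤ rpx p x := by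
            rcases Nat.eq_zero_or_pos (rpx p x) with h0 | h
            · rw [h0] at hex; simp at hex; omega
            · exact h
          have hrm : rpx p x ≤ m := by
            rw [hm]
            exact (Nat.le_log_iff_pow_le (by norm_num) (by omega)).mpr (by omega)
          apply hxS
          rw [hSpowdef, Finset.mem_image]
          refine ⟨rpx p x - 1, Finset.mem_range.mpr (by omega), ?_⟩
          rw [show rpx p x - 1 + 1 = rpx p x by omega]
          exact hex
        rw [zero_add, ← one_div_pow, pow_add]
        apply mul_le_mul_of_nonneg_left ?_ (by positivity : (0:ℝ) ≤ (1/2:ℝ)^x)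
        rw [one_div_pow]
        apply one_div_le_one_div_of_le (by positivity)
        exact_mod_cast hple
  
  have hLsub : Lset p ⊆ Finset.Icc 2 (p+1) := by
    intro x hx
    exact Finset.mem_Icc.mpr (mem_Lset_iff.mp hx).1
  have hgb : S ≤ ∑ x ∈ Finset.Icc 2 (p+1), gbd p m x := by
    calc S ≤ ∑ x ∈ Lset p, gbd p m x := Finset.sum_le_sum hbound
    _ ≤ _ := Finset.sum_le_sum_of_subset_of_nonneg hLsub (fun x _ _ => gbd_nonneg p m x)
  have hsplit : ∑ x ∈ Finset.Icc 2 (p+1), gbd p m x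
      = gbd p m (p+1) + ∑ x ∈ Finset.Icc 2 p, gbd p m x := by
    rw [← Finset.insert_Icc_right_eq_Icc_add_one (by omega : 2 ≤ p + 1),
      Finset.sum_insert (by simp [Finset.mem_Icc])]
  have hgp1 : gbd p m (p+1) = (1/2:ℝ)^(p+1) := by rw [gbd, if_pos rfl]
  have hIcc2 : ∑ x ∈ Finset.Icc 2 p, gbd p m x ≤ sigmaS + (1/2)*(1/(p:ℝ)) := by
    have hcong : ∀ x ∈ Finset.Icc 2 p, gbd p m x
        = (if x ∈ Spow then (1/2:ℝ)^(x + Nat.log 2 x) else 0) + (1/2:ℝ)^x * (1/(p:ℝ)) := by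
      intro x hx
      have hx' := Finset.mem_Icc.mp hx
      rw [gbd, if_neg (by omega), ← hSpowdef]
    rw [Finset.sum_congr rfl hcong, Finset.sum_add_distrib]
    have hpart1 : ∑ x ∈ Finset.Icc 2 p,
        (if x ∈ Spow then (1/2:ℝ)^(x + Nat.log 2 x) else 0) ≤ sigmaS := by
      classical
      rw [← Finset.sum_filter]
      have hsub2 : (Finset.Icc 2 p).filter (fun x => x ∈ Spow) ⊆ Spow :=
        fun x hx => (Finset.mem_filter.mp hx).2
      calc _ ≤ ∑ x ∈ Spow, (1/2:ℝ)^(x + Nat.log 2 x) :=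
            Finset.sum_le_sum_of_subset_of_nonneg hsub2 (fun x _ _ => by positivity)
        _ = ∑ j ∈ Finset.range m, fseq j := by
            rw [hSpowdef, Finset.sum_image hinj]
            refine Finset.sum_congr rfl fun j hj => ?_
            rw [Nat.log_pow (by norm_num), fseq]
        _ ≤ sigmaS := partial_le_sigma m
    have hpart2 : ∑ x ∈ Finset.Icc 2 p, (1/2:ℝ)^x * (1/(p:ℝ)) ≤ (1/2)*(1/(p:ℝ)) := by
      rw [← Finset.sum_mul]
      refine mul_le_mul_of_nonneg_right ?_ (by positivity)
      rw [← Finset.Ico_add_one_right_eq_Icc, geom_sum_Ico (by norm_num : (1/2:ℝ) ≠ 1) (by omega)]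
      rw [div_le_iff_of_neg (by norm_num : (1/2:ℝ) - 1 < 0)]
      have h0 : (0:ℝ) ≤ (1/2:ℝ)^(p+1) := by positivity
      norm_num
    linarith
  have hup : S ≤ sigmaS + (1/2:ℝ)^(p+1) + (1/2)*(1/(p:ℝ)) := by
    rw [hsplit, hgp1] at hgb
    linarith
  have htail : sigmaS ≤ ∑ j ∈ Finset.range m, fseq j + (1/2:ℝ)^(p+4) := by
    have h := sigma_le_partial m
    have h2 : 2 * fseq m ≤ (1/2:ℝ)^(p+4) := by
      rw [fseq]
      have he : (2:ℝ) * (1/2)^(2^(m+1)+(m+1)) = (1/2)^(2^(m+1)+m) := by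
        rw [show 2^(m+1)+(m+1) = (2^(m+1)+m)+1 from by ring, pow_succ]
        ring
      rw [he]
      apply pow_le_pow_of_le_one (by norm_num) (by norm_num)
      omega
    linarith
  have hS_ge : sigmaS - (1/2:ℝ)^(p+4) ≤ S := by linarith
  have hP11 : (11:ℝ) ≤ (p:ℝ) := by exact_mod_cast h11
  have hA1 : (p:ℝ) + 1 ≤ (2:ℝ)^p := by exact_mod_cast Nat.lt_two_pow_self (n := p)
  have hB1 : (p:ℝ) + 1 ≤ (2:ℝ)^o := by exact_mod_cast hppow
  have hBA : 2 * (2:ℝ)^o ≤ (2:ℝ)^p := by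
    have h1 : (2:ℕ)^(o+1) ≤ 2^p := Nat.pow_le_pow_right (by norm_num) (by omega)
    have h2 : (2:ℝ)^(o+1) ≤ (2:ℝ)^p := by exact_mod_cast h1
    rw [pow_succ] at h2
    linarith
  have hSu : S ≤ sigmaS + 1/(p:ℝ) := by
    have hc : (2:ℝ)*(p:ℝ) ≤ (2:ℝ)^(p+1) := by
      rw [pow_succ]
      nlinarith [hA1]
    have hd := one_div_le_one_div_of_le (by positivity : (0:ℝ) < 2*(p:ℝ)) hc
    have he : (1/2:ℝ)^(p+1) = 1/(2:ℝ)^(p+1) := one_div_pow 2 (p+1)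
    have hf : 1/((2:ℝ)*(p:ℝ)) = (1/2)*(1/(p:ℝ)) := by
      rw [one_div_mul_eq_div]
      ring
    rw [hf] at hd
    rw [he] at hup
    linarith
  have hε : (1/2:ℝ)^(p+4) * (2:ℝ)^p = 1/16 := by
    calc (1/2:ℝ)^(p+4) * 2^p = ((1/2:ℝ)^p * 2^p) * (1/2)^4 := by rw [pow_add]; ring
    _ = 1/16 := by rw [← mul_pow]; norm_num
  have harith := arith_main hP11 hA1 hB1 hBA sigma_ge sigma_le_quarter hS_ge hSu hε
  constructor
  · have h := harith.1
    simp only [Fval, ← ho, ← hSdef]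
    convert h using 2
  · have h := harith.2
    simp only [Fval, ← ho, ← hSdef]
    convert h using 2

/-- The set of rational numbers `{F(p) : p an odd prime}` is infinite. -/
theorem statement6 :
    {x : ℝ | ∃ p : ℕ, p.Prime ∧ p ≠ 2 ∧ Fval p = x}.Infinite := by
  by_contra hfin
  rw [Set.not_infinite] at hfin
  classical
  set Φ : ℝ := 47/64 + sigmaS/64 with hΦ
  set W := hfin.toFinset.filter (fun v => Φ < v) with hW
  have h11 : Nat.Prime 11 := by norm_num
  have hmem : ∀ q : ℕ, q.Prime → 11 ≤ q → Fval q ∈ W := by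
    intro q hq hq11
    rw [hW, Finset.mem_filter, Set.Finite.mem_toFinset]
    exact ⟨⟨q, hq, by omega, rfl⟩, (key_bounds hq hq11).1⟩
  have hWne : W.Nonempty := ⟨Fval 11, hmem 11 h11 (le_refl _)⟩
  set v := W.min' hWne with hv
  have hvmem : v ∈ W := W.min'_mem hWne
  have hΦv : Φ < v := (Finset.mem_filter.mp hvmem).2
  have hδ : 0 < v - Φ := by linarith
  obtain ⟨K, hK⟩ := exists_nat_gt (1/(v - Φ))
  obtain ⟨q, hqK, hq⟩ := Nat.exists_infinite_primes (max K 11 + 1)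
  have hq11 : 11 ≤ q := by omega
  have h1 : v ≤ Fval q := Finset.min'_le _ _ (hmem q hq hq11)
  have h2 : Fval q ≤ Φ + 1/(q:ℝ) := (key_bounds hq hq11).2
  have hqK' : (K:ℝ) < (q:ℝ) := by exact_mod_cast (by omega : K < q)
  have hqpos : (0:ℝ) < (q:ℝ) := by
    have : (0:ℕ) < q := by omega
    exact_mod_cast this
  have h3 : 1/(q:ℝ) < v - Φ := by
    have h4 : 1/(v-Φ) < (q:ℝ) := lt_trans hK hqK'
    rw [div_lt_iff₀ hδ] at h4
    rw [div_lt_iff₀ hqpos]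
    nlinarith
  linarith
end

section
/- Let G be a simply-connected T-graph, let p ∈ G, and let λ ∈ Γ(p), where Γ(p) denotes the set of labels of paths in R(G,T) starting at p, together with the identity of Γ. Then: (i) the map Γ(p) → G sending γ to γ.p is a bijection; (ii) Γ(λ.p) = Γ(p)·λ⁻¹ := {γ·λ⁻¹ : γ ∈ Γ(p)}. -/
/-- The ring automorphism of `ℤ[1/2][A]` induced by the action of `γ ∈ Γ` on `A`. -/
noncomputable def gact {A Γ : Type*} [CommGroup A] [Group Γ] (φ : Γ →* MulAut A) (γ : Γ)
    (r : MonoidAlgebra Zhalf A) : MonoidAlgebra Zhalf A :=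
  MonoidAlgebra.ofCoeff (Finsupp.mapDomain (⇑(φ γ)) r.coeff)

/-- A single traversal, forwards or backwards, of an edge of the multigraph `R(G,T)`,
for `T = Σ_i γv i · fv i`, recording the label `g` of the traversal. -/
def EdgeStep {A Γ : Type*} [CommGroup A] [Group Γ] (φ : Γ →* MulAut A) {m : ℕ}
    (γv : Fin m → Γ) (fv : Fin m → MonoidAlgebra Zhalf A)
    (G : Finset (MonoidAlgebra Zhalf A))
    (p : MonoidAlgebra Zhalf A) (g : Γ) (q : MonoidAlgebra Zhalf A) : Prop :=
  p ∈ G ∧ q ∈ G ∧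
    ((∃ i, fv i * p ≠ 0 ∧ gact φ (γv i) p = q ∧ g = γv i) ∨
     (∃ i, fv i * q ≠ 0 ∧ gact φ (γv i) q = p ∧ g = (γv i)⁻¹))

/-- Paths: the reflexive–transitive closure of the step relation `St`, recording labels.
`Reach St p g q` means there is a (possibly empty) path from `p` to `q` with label `g`;
labels compose as `λ_w ⋯ λ_1`. -/
inductive Reach {P G' : Type*} [Group G'] (St : P → G' → P → Prop) : P → G' → P → Prop
  | refl (p : P) : Reach St p 1 p
  | tail {p q r : P} {g h : G'} : Reach St p g q → St q h r → Reach St p (h * g) r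

lemma gact_one {A Γ : Type*} [CommGroup A] [Group Γ] (φ : Γ →* MulAut A)
    (r : MonoidAlgebra Zhalf A) : gact φ 1 r = r := by
  simp [gact, Finsupp.mapDomain_id]

lemma gact_mul {A Γ : Type*} [CommGroup A] [Group Γ] (φ : Γ →* MulAut A) (g h : Γ)
    (r : MonoidAlgebra Zhalf A) : gact φ (g * h) r = gact φ g (gact φ h r) := by
  simp only [gact, map_mul]
  rw [← Finsupp.mapDomain_comp]
  rfl

lemma Reach.cast {P G' : Type*} [Group G'] {St : P → G' → P → Prop} {p q : P} {g g' : G'}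
    (h : Reach St p g q) (hg : g = g') : Reach St p g' q := hg ▸ h

lemma Reach.trans' {P G' : Type*} [Group G'] {St : P → G' → P → Prop} {p q r : P} {g h : G'}
    (h1 : Reach St p g q) (h2 : Reach St q h r) : Reach St p (h * g) r := by
  induction h2 with
  | refl => exact h1.cast (one_mul g).symm
  | tail h2 hst ih => exact (ih.tail hst).cast (mul_assoc _ _ _).symm

lemma EdgeStep.symm {A Γ : Type*} [CommGroup A] [Group Γ] {φ : Γ →* MulAut A} {m : ℕ}
    {γv : Fin m → Γ} {fv : Fin m → MonoidAlgebra Zhalf A}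
    {G : Finset (MonoidAlgebra Zhalf A)} {p q : MonoidAlgebra Zhalf A} {g : Γ}
    (h : EdgeStep φ γv fv G p g q) : EdgeStep φ γv fv G q g⁻¹ p := by
  obtain ⟨hp, hq, h | h⟩ := h
  · exact ⟨hq, hp, Or.inr (by obtain ⟨i, h1, h2, h3⟩ := h; exact ⟨i, h1, h2, by rw [h3]⟩)⟩
  · refine ⟨hq, hp, Or.inl ?_⟩
    obtain ⟨i, h1, h2, h3⟩ := h
    exact ⟨i, h1, h2, by rw [h3, inv_inv]⟩

lemma Reach.symm' {P G' : Type*} [Group G'] {St : P → G' → P → Prop}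
    (hSt : ∀ {p g q}, St p g q → St q g⁻¹ p) {p q : P} {g : G'}
    (h : Reach St p g q) : Reach St q g⁻¹ p := by
  induction h with
  | refl => exact (Reach.refl _).cast inv_one.symm
  | tail h2 hst ih =>
    exact ((((Reach.refl _).tail (hSt hst)).trans' ih).cast (by group))

lemma Reach.single {P G' : Type*} [Group G'] {St : P → G' → P → Prop} {p q : P} {g : G'}
    (h : St p g q) : Reach St p g q := ((Reach.refl p).tail h).cast (mul_one g)

lemma Reach.gact_eq {A Γ : Type*} [CommGroup A] [Group Γ] {φ : Γ →* MulAut A} {m : ℕ}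
    {γv : Fin m → Γ} {fv : Fin m → MonoidAlgebra Zhalf A}
    {G : Finset (MonoidAlgebra Zhalf A)} {p q : MonoidAlgebra Zhalf A} {g : Γ}
    (h : Reach (EdgeStep φ γv fv G) p g q) : gact φ g p = q := by
  induction h with
  | refl => exact gact_one φ _
  | tail h2 hst ih =>
    obtain ⟨_, _, hc | hc⟩ := hst
    · obtain ⟨i, _, h2', h3⟩ := hc
      rw [h3, gact_mul, ih, h2']
    · obtain ⟨i, _, h2', h3⟩ := hc
      rw [gact_mul, ih, h3, ← h2', ← gact_mul, inv_mul_cancel, gact_one]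

lemma Reach.mem {A Γ : Type*} [CommGroup A] [Group Γ] {φ : Γ →* MulAut A} {m : ℕ}
    {γv : Fin m → Γ} {fv : Fin m → MonoidAlgebra Zhalf A}
    {G : Finset (MonoidAlgebra Zhalf A)} {p q : MonoidAlgebra Zhalf A} {g : Γ}
    (hp : p ∈ G) (h : Reach (EdgeStep φ γv fv G) p g q) : q ∈ G := by
  induction h with
  | refl => exact hp
  | tail _ hst _ => exact hst.2.1

/-- STATEMENT 18: for a simply-connected `T`-graph `G`, `p ∈ G` and `λ ∈ Γ(p)` (the set of
labels of paths starting at `p`, together with the identity): (i) `γ ↦ γ.p` is a bijection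
from `Γ(p)` onto `G`; (ii) `Γ(λ.p) = Γ(p)·λ⁻¹`. -/
theorem statement18 (Γ : Type) [Group Γ] [Countable Γ] (A : Type) [CommGroup A]
    [Countable A] (hA : ∀ x : A, x ^ 2 = 1) (φ : Γ →* MulAut A)
    (m : ℕ) (γv : Fin m → Γ) (hdist : Function.Injective γv)
    (fv : Fin m → MonoidAlgebra Zhalf A)
    (G : Finset (MonoidAlgebra Zhalf A))
    (hne : ∀ p ∈ G, p ≠ 0) (hidem : ∀ p ∈ G, p * p = p)
    (horth : ∀ p ∈ G, ∀ q ∈ G, p ≠ q → p * q = 0)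
    (hgraph : ∀ p ∈ G, ∀ i, fv i * p = 0 ∨
      ((∃ c : Zhalf, c ≠ 0 ∧ fv i * p = MonoidAlgebra.single (1 : A) c * p) ∧ gact φ (γv i) p ∈ G))
    (hconn : ∀ p ∈ G, ∀ q ∈ G, ∃ g : Γ, Reach (EdgeStep φ γv fv G) p g q)
    (hsimp : ∀ p ∈ G, ∀ g : Γ, Reach (EdgeStep φ γv fv G) p g p → g = 1)
    (p : MonoidAlgebra Zhalf A) (hp : p ∈ G) (lam : Γ)
    (hlam : lam ∈ {g : Γ | ∃ q, Reach (EdgeStep φ γv fv G) p g q}) :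
    Set.BijOn (fun g => gact φ g p)
        {g : Γ | ∃ q, Reach (EdgeStep φ γv fv G) p g q} ↑G ∧
      {g : Γ | ∃ q, Reach (EdgeStep φ γv fv G) (gact φ lam p) g q} =
        (fun g => g * lam⁻¹) '' {g : Γ | ∃ q, Reach (EdgeStep φ γv fv G) p g q} := by
  obtain ⟨q0, hq0⟩ := hlam
  have hq0G : q0 ∈ G := hq0.mem hp
  have hq0eq : gact φ lam p = q0 := hq0.gact_eq
  constructor
  · refine ⟨?_, ?_, ?_⟩
    · rintro g ⟨q, hq⟩
      simpa [hq.gact_eq] using hq.mem hp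
    · rintro g1 ⟨q1, hq1⟩ g2 ⟨q2, hq2⟩ heq
      simp only at heq
      have e1 := hq1.gact_eq
      have e2 := hq2.gact_eq
      have hq12 : q1 = q2 := by rw [← e1, ← e2, heq]
      subst hq12
      have hloop : Reach (EdgeStep φ γv fv G) p (g2⁻¹ * g1) p :=
        hq1.trans' (hq2.symm' (fun h => h.symm))
      exact (inv_mul_eq_one.mp (hsimp p hp _ hloop)).symm
    · rintro q hq
      obtain ⟨g, hg⟩ := hconn p hp q hq
      exact ⟨g, ⟨q, hg⟩, hg.gact_eq⟩
  · rw [hq0eq]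
    ext g
    simp only [Set.mem_setOf_eq, Set.mem_image]
    constructor
    · rintro ⟨q, hq⟩
      exact ⟨g * lam, ⟨q, (hq0.trans' hq)⟩, by group⟩
    · rintro ⟨g', ⟨q, hq⟩, rfl⟩
      exact ⟨q, ((hq0.symm' (fun h => h.symm)).trans' hq).cast (by group)⟩
end
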